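/- Let ρ₁, ρ₂, ρ₃ be complex numbers with ρ₁ + ρ₂ + ρ₃ = 0, and set τ₁ = ρ₂·conj(ρ₃), τ₂ = ρ₃·conj(ρ₁), τ₃ = ρ₁·conj(ρ₂). Then: (i) (|ρ₁|⁴ + |ρ₂|⁴ + |ρ₃|⁴)² = |ρ₁|⁸ + |ρ₂|⁸ + |ρ₃|⁸ + 2(|τ₁|⁴ + |τ₂|⁴ + |τ₃|⁴); (ii) |ρ₁|⁸ + |ρ₂|⁸ + |ρ₃|⁸ + 2·Re(τ₁⁴ + τ₂⁴ + τ₃⁴) = (1/4)|ρ₁² + ρ₂² + ρ₃²|⁴; and consequently (|ρ₁|⁴ + |ρ₂|⁴ + |ρ₃|⁴)² ≥ (1/4)|ρ₁² + ρ₂² + ρ₃²|⁴. -/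

import Mathlib

set_option maxHeartbeats 2000000


/-- The eigenvalue computation `16χ² = Σtᵢ⁴ + 2Σ|τₖ|⁴ ≥ Σ(tᵢ⁴ + τᵢ⁴ + conj(τᵢ)⁴) = tr T⁴ = 4α⁴`
used in the proof of Proposition 1. -/
theorem belRobinson_trace_fourth_power (ρ₁ ρ₂ ρ₃ : ℂ) (hsum : ρ₁ + ρ₂ + ρ₃ = 0)
    (τ₁ τ₂ τ₃ : ℂ)
    (hτ₁ : τ₁ = ρ₂ * (starRingEnd ℂ) ρ₃)
    (hτ₂ : τ₂ = ρ₃ * (starRingEnd ℂ) ρ₁)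
    (hτ₃ : τ₃ = ρ₁ * (starRingEnd ℂ) ρ₂) :
    (‖ρ₁‖ ^ 4 + ‖ρ₂‖ ^ 4 + ‖ρ₃‖ ^ 4) ^ 2 =
      ‖ρ₁‖ ^ 8 + ‖ρ₂‖ ^ 8 + ‖ρ₃‖ ^ 8 +
        2 * (‖τ₁‖ ^ 4 + ‖τ₂‖ ^ 4 + ‖τ₃‖ ^ 4) ∧
    ‖ρ₁‖ ^ 8 + ‖ρ₂‖ ^ 8 + ‖ρ₃‖ ^ 8 +
        2 * (τ₁ ^ 4 + τ₂ ^ 4 + τ₃ ^ 4).re =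
      (1/4) * ‖ρ₁ ^ 2 + ρ₂ ^ 2 + ρ₃ ^ 2‖ ^ 4 ∧
    (‖ρ₁‖ ^ 4 + ‖ρ₂‖ ^ 4 + ‖ρ₃‖ ^ 4) ^ 2 ≥
      (1/4) * ‖ρ₁ ^ 2 + ρ₂ ^ 2 + ρ₃ ^ 2‖ ^ 4 := by
  have hρ₃ : ρ₃ = -(ρ₁ + ρ₂) := by linear_combination hsum
  subst hρ₃ hτ₁ hτ₂ hτ₃
  have habs : ∀ z : ℂ, ‖z‖ ^ 4 = Complex.normSq z ^ 2 := by
    intro z; rw [show (4 : ℕ) = 2 * 2 from rfl, pow_mul, Complex.sq_norm]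
  have habs8 : ∀ z : ℂ, ‖z‖ ^ 8 = Complex.normSq z ^ 4 := by
    intro z; rw [show (8 : ℕ) = 2 * 4 from rfl, pow_mul, Complex.sq_norm]
  have h1 : (‖ρ₁‖ ^ 4 + ‖ρ₂‖ ^ 4 + ‖-(ρ₁ + ρ₂)‖ ^ 4) ^ 2 =
      ‖ρ₁‖ ^ 8 + ‖ρ₂‖ ^ 8 + ‖-(ρ₁ + ρ₂)‖ ^ 8 +
        2 * (‖ρ₂ * (starRingEnd ℂ) (-(ρ₁ + ρ₂))‖ ^ 4 +
          ‖-(ρ₁ + ρ₂) * (starRingEnd ℂ) ρ₁‖ ^ 4 +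
          ‖ρ₁ * (starRingEnd ℂ) ρ₂‖ ^ 4) := by
    simp only [map_mul, norm_mul, Complex.norm_conj, mul_pow, habs, habs8]
    ring
  have h2 : ‖ρ₁‖ ^ 8 + ‖ρ₂‖ ^ 8 + ‖-(ρ₁ + ρ₂)‖ ^ 8 +
        2 * ((ρ₂ * (starRingEnd ℂ) (-(ρ₁ + ρ₂))) ^ 4 +
          (-(ρ₁ + ρ₂) * (starRingEnd ℂ) ρ₁) ^ 4 +
          (ρ₁ * (starRingEnd ℂ) ρ₂) ^ 4).re =
      (1/4) * ‖ρ₁ ^ 2 + ρ₂ ^ 2 + (-(ρ₁ + ρ₂)) ^ 2‖ ^ 4 := by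
    simp only [habs8, habs, Complex.normSq_apply, show (4:ℕ) = 2+1+1 from rfl,
      show (2:ℕ) = 1+1 from rfl, pow_succ, pow_zero, one_mul,
      Complex.add_re, Complex.add_im, Complex.mul_re, Complex.mul_im,
      Complex.neg_re, Complex.neg_im, Complex.conj_re, Complex.conj_im]
    ring
  refine ⟨h1, h2, ?_⟩
  rw [h1, ← h2]
  have hre : ∀ z : ℂ, (z ^ 4).re ≤ ‖z‖ ^ 4 := fun z => by
    calc (z ^ 4).re ≤ ‖z ^ 4‖ := Complex.re_le_norm _
    _ = ‖z‖ ^ 4 := norm_pow _ _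
  have := hre (ρ₂ * (starRingEnd ℂ) (-(ρ₁ + ρ₂)))
  have := hre (-(ρ₁ + ρ₂) * (starRingEnd ℂ) ρ₁)
  have := hre (ρ₁ * (starRingEnd ℂ) ρ₂)
  simp only [Complex.add_re]
  linarith
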